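/- Let D be a block-diagonal matrix with symmetric positive definite blocks D₁, …, D_b, let ρ > 0 satisfy ρ < min over i of the smallest eigenvalue of Dᵢ, let Φ = (I + D/ρ)⁻¹, and P = (1/b)·(J_b ⊗ I_p). Then every eigenvalue of M = (I − P − Φ)(I − 2P) is real. -/

import Mathlib

open Matrix

open Pointwise

section AuxLemmas

variable {n : Type*} [Fintype n] [DecidableEq n]

lemma auxPosDefConj {A B : Matrix n n ℝ} (hA : A.PosDef) (hB : IsUnit B) :
    (Bᴴ * A * B).PosDef := by
  refine Matrix.PosDef.of_dotProduct_mulVec_pos (Matrix.isHermitian_conjTranspose_mul_mul B hA.1) fun x hx => ?_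
  have hinj : Function.Injective (B.mulVec) := Matrix.mulVec_injective_iff_isUnit.mpr hB
  have hBx : B *ᵥ x ≠ 0 := fun h => hx (hinj (by rw [h, mulVec_zero]))
  simpa only [star_mulVec, dotProduct_mulVec, vecMul_vecMul] using hA.dotProduct_mulVec_pos hBx

lemma auxPosDefEig {A : Matrix n n ℝ} (hA : A.IsHermitian)
    (h : ∀ i, 0 < hA.eigenvalues i) : A.PosDef := by
  have hdiag : (Matrix.diagonal (RCLike.ofReal ∘ hA.eigenvalues) : Matrix n n ℝ).PosDef :=
    Matrix.PosDef.diagonal (fun i => by simpa using h i)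
  have hu : IsUnit (star (hA.eigenvectorUnitary : Matrix n n ℝ)) :=
    (Unitary.toUnits (star hA.eigenvectorUnitary)).isUnit
  have := auxPosDefConj hdiag hu
  rw [hA.spectral_theorem]
  simpa [Unitary.conjStarAlgAut_apply, Matrix.star_eq_conjTranspose, Matrix.conjTranspose_conjTranspose] using this

lemma auxHermSpectrumReal {A : Matrix n n ℂ} (hA : A.IsHermitian) :
    ∀ μ ∈ spectrum ℂ A, μ.im = 0 := by
  have hs : spectrum ℂ A = Set.range (fun i => (hA.eigenvalues i : ℂ)) := by
    conv_lhs => rw [hA.spectral_theorem]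
    rw [Unitary.conjStarAlgAut_apply, Unitary.spectrum_star_right_conjugate, spectrum_diagonal]
    rfl
  intro μ hμ
  rw [hs] at hμ
  obtain ⟨i, rfl⟩ := hμ
  simp

lemma auxSubSmulOne {A : Matrix n n ℝ} (hA : A.IsHermitian) {ρ : ℝ}
    (h : ∀ x ∈ spectrum ℝ A, ρ < x) :
    (A - ρ • (1 : Matrix n n ℝ)).PosDef := by
  have hH : (A - ρ • (1 : Matrix n n ℝ)).IsHermitian := by
    apply hA.sub
    simp [Matrix.IsHermitian, Matrix.conjTranspose_smul]
  refine auxPosDefEig hH fun i => ?_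
  have hmem := hH.eigenvalues_mem_spectrum_real i
  have hset : spectrum ℝ (A - ρ • (1 : Matrix n n ℝ)) = spectrum ℝ A - ({ρ} : Set ℝ) := by
    rw [show A - ρ • (1 : Matrix n n ℝ) = A - algebraMap ℝ (Matrix n n ℝ) ρ from by
      rw [Algebra.algebraMap_eq_smul_one], ← spectrum.sub_singleton_eq]
  rw [hset] at hmem
  obtain ⟨x, hx, y, hy, hxy⟩ := Set.mem_sub.mp hmem
  rw [Set.mem_singleton_iff.mp hy] at hxy
  rw [← hxy]
  linarith [h x hx]

lemma auxPosDefSmul {A : Matrix n n ℝ} (hA : A.PosDef) {c : ℝ} (hc : 0 < c) :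
    (c • A).PosDef := by
  refine Matrix.PosDef.of_dotProduct_mulVec_pos (by rw [Matrix.IsHermitian, Matrix.conjTranspose_smul, hA.1.eq]; simp) fun x hx => ?_
  have := hA.dotProduct_mulVec_pos hx
  rw [Matrix.smul_mulVec, dotProduct_smul]
  exact mul_pos hc this

lemma auxPosDefBlockDiagonal {p b : ℕ} {D : Fin b → Matrix (Fin p) (Fin p) ℝ}
    (hD : ∀ i, (D i).PosDef) : (Matrix.blockDiagonal D).PosDef := by
  refine Matrix.PosDef.of_dotProduct_mulVec_pos ?_ ?_
  · ext ⟨i, k⟩ ⟨j, l⟩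
    rcases eq_or_ne k l with rfl | hkl
    · simp only [Matrix.conjTranspose_apply, Matrix.blockDiagonal_apply, if_pos rfl]
      have := congrFun (congrFun ((hD k).1) i) j
      simpa [Matrix.conjTranspose_apply] using this
    · simp [Matrix.conjTranspose_apply, Matrix.blockDiagonal_apply, hkl, Ne.symm hkl]
  · intro x hx
    have hform : star x ⬝ᵥ (Matrix.blockDiagonal D) *ᵥ x
        = ∑ k : Fin b, star (fun i => x (i, k)) ⬝ᵥ (D k) *ᵥ (fun i => x (i, k)) := by
      simp only [dotProduct, Matrix.mulVec, Matrix.blockDiagonal_apply, Fintype.sum_prod_type]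
      rw [Finset.sum_comm]
      refine Finset.sum_congr rfl fun k _ => Finset.sum_congr rfl fun i _ => ?_
      congr 1
      rw [Finset.sum_comm]
      simp [Finset.sum_ite_eq, dotProduct]
    rw [hform]
    obtain ⟨⟨i0, k0⟩, hik⟩ := Function.ne_iff.mp hx
    refine Finset.sum_pos' (fun k _ => (hD k).posSemidef.dotProduct_mulVec_nonneg _) ⟨k0, Finset.mem_univ _, ?_⟩
    refine (hD k0).dotProduct_mulVec_pos (x := fun i => x (i, k0)) fun h0 => hik ?_
    exact congrFun h0 i0

open scoped MatrixOrder in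
lemma auxSqrtFacts {A : Matrix n n ℝ} (hA : A.PosDef) :
    ∃ R : Matrix n n ℝ, R.IsHermitian ∧ IsUnit R ∧ R * R = A := by
  have h0 : 0 ≤ A := Matrix.nonneg_iff_posSemidef.mpr hA.posSemidef
  exact ⟨CFC.sqrt A, (Matrix.nonneg_iff_posSemidef.mp (CFC.sqrt_nonneg A)).isHermitian,
    (CFC.isUnit_sqrt_iff A h0).mpr hA.isUnit, CFC.sqrt_mul_sqrt_self A h0⟩

end AuxLemmas

/-- The averaging projection `P = (1/b)·(J_b ⊗ I_p)` viewed on the index type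
`Fin p × Fin b` used by `Matrix.blockDiagonal`. -/
noncomputable def avgProj (p b : ℕ) : Matrix (Fin p × Fin b) (Fin p × Fin b) ℝ :=
  fun x y => if x.1 = y.1 then (b : ℝ)⁻¹ else 0

theorem admm_map_real_eigenvalues_small_step {p b : ℕ}
    (D : Fin b → Matrix (Fin p) (Fin p) ℝ) (hD : ∀ i, (D i).PosDef)
    (ρ : ℝ) (hρ : 0 < ρ)
    (hspec : ∀ i, ∀ x ∈ spectrum ℝ (D i), ρ < x) :
    ∀ μ ∈ spectrum ℂ
        ((((1 : Matrix (Fin p × Fin b) (Fin p × Fin b) ℝ) - avgProj p b -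
            (1 + ρ⁻¹ • Matrix.blockDiagonal D)⁻¹) *
          (1 - (2 : ℝ) • avgProj p b)).map (algebraMap ℝ ℂ)),
      μ.im = 0 := by
  intro μ hμ
  by_cases hne : Nonempty (Fin p × Fin b)
  case neg =>
    haveI : IsEmpty (Fin p × Fin b) := not_nonempty_iff.mp hne
    haveI : Subsingleton (Matrix (Fin p × Fin b) (Fin p × Fin b) ℂ) :=
      ⟨fun A B => by ext i j; exact isEmptyElim i⟩
    exact absurd hμ (spectrum.notMem_iff.mpr (isUnit_of_subsingleton _))
  case pos =>
    have hb : 0 < b := by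
      obtain ⟨⟨_, k⟩⟩ := hne
      exact k.pos
    have hbR : (b : ℝ) ≠ 0 := Nat.cast_ne_zero.mpr hb.ne'
    set P : Matrix (Fin p × Fin b) (Fin p × Fin b) ℝ := avgProj p b with hPdef
    set W : Matrix (Fin p × Fin b) (Fin p × Fin b) ℝ :=
      1 + ρ⁻¹ • Matrix.blockDiagonal D with hWdef
    set U : Matrix (Fin p × Fin b) (Fin p × Fin b) ℝ := 1 - (2 : ℝ) • P with hUdef
    set V : Matrix (Fin p × Fin b) (Fin p × Fin b) ℝ := 1 - (2 : ℝ) • W⁻¹ with hVdef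
    set M : Matrix (Fin p × Fin b) (Fin p × Fin b) ℝ := (1 - P - W⁻¹) * U with hMdef
    -- algebraic facts about the projection
    have hPP : P * P = P := by
      ext ⟨i, k⟩ ⟨j, l⟩
      simp only [Matrix.mul_apply, hPdef, avgProj, Fintype.sum_prod_type]
      rcases eq_or_ne i j with rfl | hij
      · simp [Finset.sum_ite_eq, Finset.sum_const]
        rw [mul_comm]
        field_simp
      · simp [Finset.sum_ite_eq, hij]
    have hP_herm : P.IsHermitian := by
      ext ⟨i, k⟩ ⟨j, l⟩
      simp [hPdef, avgProj, Matrix.conjTranspose_apply, eq_comm]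
    have hU_herm : U.IsHermitian := by
      rw [hUdef, Matrix.IsHermitian, Matrix.conjTranspose_sub, Matrix.conjTranspose_smul,
        Matrix.conjTranspose_one, hP_herm.eq]
      simp
    have hUU : U * U = 1 := by
      rw [hUdef]
      simp only [Matrix.sub_mul, Matrix.mul_sub, Matrix.smul_mul, Matrix.mul_smul, hPP,
        Matrix.one_mul, Matrix.mul_one, smul_smul]
      module
    -- positive definiteness of W and W - 2
    have hblk : (Matrix.blockDiagonal D).PosDef := auxPosDefBlockDiagonal hD
    have hW_pd : W.PosDef := by
      rw [hWdef]
      exact Matrix.PosDef.add_posSemidef Matrix.PosDef.one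
        (auxPosDefSmul hblk (inv_pos.mpr hρ)).posSemidef
    have hW2_pd : (W - (2:ℝ) • (1 : Matrix (Fin p × Fin b) (Fin p × Fin b) ℝ)).PosDef := by
      have heq : W - (2:ℝ) • (1 : Matrix (Fin p × Fin b) (Fin p × Fin b) ℝ)
          = ρ⁻¹ • Matrix.blockDiagonal (fun i => D i - ρ • (1 : Matrix (Fin p) (Fin p) ℝ)) := by
        rw [hWdef,
          show (fun i => D i - ρ • (1 : Matrix (Fin p) (Fin p) ℝ))
            = D - (fun _ => ρ • 1) from rfl,
          Matrix.blockDiagonal_sub,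
          show (fun _ : Fin b => ρ • (1 : Matrix (Fin p) (Fin p) ℝ))
            = ρ • (fun _ : Fin b => (1 : Matrix (Fin p) (Fin p) ℝ)) from rfl,
          Matrix.blockDiagonal_smul,
          show Matrix.blockDiagonal (fun _ : Fin b => (1 : Matrix (Fin p) (Fin p) ℝ)) = 1 from
            Matrix.blockDiagonal_one,
          smul_sub, smul_smul, inv_mul_cancel₀ hρ.ne']
        module
      rw [heq]
      exact auxPosDefSmul
        (auxPosDefBlockDiagonal fun i => auxSubSmulOne (hD i).1 (hspec i)) (inv_pos.mpr hρ)
    -- positive definiteness of V = 1 - 2 W⁻¹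
    have hV_pd : V.PosDef := by
      obtain ⟨R, hRh, hRu, hRR⟩ := auxSqrtFacts hW_pd.inv
      have hWdet : IsUnit W.det := (Matrix.isUnit_iff_isUnit_det _).mp hW_pd.isUnit
      have hRdet : IsUnit R.det := (Matrix.isUnit_iff_isUnit_det _).mp hRu
      have hWinvinv : W⁻¹⁻¹ = W := Matrix.nonsing_inv_nonsing_inv _ hWdet
      have hWeq : W = R⁻¹ * R⁻¹ := by rw [← Matrix.mul_inv_rev, hRR, hWinvinv]
      have hRWR : R * W * R = 1 := by
        rw [hWeq, ← Matrix.mul_assoc, Matrix.mul_nonsing_inv _ hRdet, Matrix.one_mul,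
          Matrix.nonsing_inv_mul _ hRdet]
      have hVeq : V = Rᴴ * (W - (2:ℝ) • 1) * R := by
        rw [hRh.eq, Matrix.mul_sub, Matrix.sub_mul, hRWR, Matrix.mul_smul, Matrix.mul_one,
          Matrix.smul_mul, hRR, hVdef]
      rw [hVeq]
      exact auxPosDefConj hW2_pd hRu
    -- the square root of V and the symmetrized product
    obtain ⟨T, hTh, hTu, hTT⟩ := auxSqrtFacts hV_pd
    set S : Matrix (Fin p × Fin b) (Fin p × Fin b) ℝ := T * U * T with hSdef
    have hS_herm : S.IsHermitian := by
      rw [hSdef, Matrix.IsHermitian, Matrix.conjTranspose_mul, Matrix.conjTranspose_mul,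
        hTh.eq, hU_herm.eq, Matrix.mul_assoc]
    have hVUT : V * U * T = T * S := by
      rw [hSdef, ← hTT]
      simp only [Matrix.mul_assoc]
    have h2M : (2:ℝ) • M = 1 + V * U := by
      have hsum : (2:ℝ) • ((1 : Matrix (Fin p × Fin b) (Fin p × Fin b) ℝ) - P - W⁻¹)
          = U + V := by
        rw [hUdef, hVdef]
        module
      calc (2:ℝ) • M = ((2:ℝ) • ((1 : Matrix (Fin p × Fin b) (Fin p × Fin b) ℝ) - P - W⁻¹)) * U :=
            (Matrix.smul_mul _ _ _).symm
        _ = (U + V) * U := by rw [hsum]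
        _ = U * U + V * U := Matrix.add_mul _ _ _
        _ = 1 + V * U := by rw [hUU]
    -- pass to ℂ
    set f := algebraMap ℝ ℂ with hfdef
    have hVUmap : (V * U).map f = (2:ℂ) • (M.map f) - 1 := by
      have h1 : V * U = (2:ℝ) • M - 1 := by rw [h2M]; abel
      have h2 : ((2:ℝ) • M).map f = (2:ℂ) • (M.map f) := by
        ext i j
        simp [Matrix.map_apply, Matrix.smul_apply, hfdef]
      rw [h1, show ((2:ℝ) • M - 1).map f = ((2:ℝ) • M).map f - (1 : Matrix _ _ ℝ).map f from
        map_sub (f.mapMatrix) _ _, h2,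
        show (1 : Matrix (Fin p × Fin b) (Fin p × Fin b) ℝ).map f = 1 from map_one f.mapMatrix]
    have hν : 2 * μ - 1 ∈ spectrum ℂ ((V * U).map f) := by
      rw [hVUmap]
      set u2 : ℂˣ := Units.mk0 (2:ℂ) two_ne_zero with hu2
      rw [show (2:ℂ) • (M.map f) - 1
            = u2 • (M.map f) - algebraMap ℂ (Matrix (Fin p × Fin b) (Fin p × Fin b) ℂ) 1 by
          simp [hu2, Units.smul_def], ← spectrum.sub_singleton_eq, spectrum.unit_smul_eq_smul]
      refine Set.sub_mem_sub ?_ rfl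
      exact ⟨μ, hμ, by simp [hu2, Units.smul_def]⟩
    have hTdet : IsUnit (T.map f) := by
      refine (Matrix.isUnit_iff_isUnit_det _).mpr ?_
      rw [show (T.map f).det = f T.det from (RingHom.map_det f T).symm]
      exact f.isUnit_map ((Matrix.isUnit_iff_isUnit_det _).mp hTu)
    set u := hTdet.unit with hu
    have h5 : (V * U).map f * (u : Matrix (Fin p × Fin b) (Fin p × Fin b) ℂ)
        = (u : Matrix (Fin p × Fin b) (Fin p × Fin b) ℂ) * (S.map f) := by
      have hcoe : (u : Matrix (Fin p × Fin b) (Fin p × Fin b) ℂ) = T.map f := hTdet.unit_spec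
      rw [hcoe, show (V*U).map f * T.map f = ((V*U)*T).map f from (Matrix.map_mul).symm, hVUT]
      exact Matrix.map_mul
    have hconj : (V * U).map f = (u : Matrix (Fin p × Fin b) (Fin p × Fin b) ℂ) * (S.map f) *
        (↑u⁻¹ : Matrix (Fin p × Fin b) (Fin p × Fin b) ℂ) := by
      rw [← h5, Units.mul_inv_cancel_right]
    rw [hconj, spectrum.units_conjugate] at hν
    have hSmap : (S.map f).IsHermitian := by
      ext i j
      have hsij : S j i = S i j := congrFun (congrFun hS_herm.eq i) j
      simp only [Matrix.conjTranspose_apply, Matrix.map_apply, hfdef, RCLike.star_def,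
        RCLike.algebraMap_eq_ofReal, hsij]
      exact Complex.conj_ofReal _
    have him := auxHermSpectrumReal hSmap _ hν
    have h2im : (2 * μ - 1).im = 2 * μ.im := by simp
    rw [h2im] at him
    linarith
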